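/- For every integer k ≥ 1 there exists a polynomial Q_k(x, y) ∈ ℂ[x, y] of total degree k + 1 such that Q_k(y³, y) = (y + 1)^{3k} for all y ∈ ℂ; explicitly Q_k(x, y) = Σ_{j=0}^{3k} binom(3k, j) x^{⌊j/3⌋} y^{r_j}, where r_j = j − 3⌊j/3⌋ ∈ {0, 1, 2}, and its leading term is 3k·x^{k−1}y². Consequently, for X = {(x,y) ∈ ℂ² : x = y³} and η(x, y) = log|1 + y|, the function ψ_k = (1/(3k)) log|Q_k| belongs to 𝓛_{(k+1)/(3k)}(ℂ²) and satisfies ψ_k = η on X. -/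

import Mathlib

open Set Filter
open scoped Real Topology

noncomputable section

/-- `ℂⁿ`. -/
abbrev Cn (n : ℕ) : Type := Fin n → ℂ

/-- Euclidean norm on `ℂⁿ`. -/
def enorm2 {n : ℕ} (z : Cn n) : ℝ := Real.sqrt (∑ i, ‖z i‖ ^ 2)

/-- `log⁺` of the euclidean norm. -/
def logPlusNorm {n : ℕ} (z : Cn n) : ℝ := max (Real.log (enorm2 z)) 0

/-- Truncation `max (u z) (-m)`, as a real number. -/
def trunc {n : ℕ} (u : Cn n → EReal) (m : ℕ) (z : Cn n) : ℝ :=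
  ((u z) ⊔ ((-(m : ℝ) : ℝ) : EReal)).toReal

/-- The closed disc of radius `r` through `a` in the complex direction `b`. -/
def closedDisc {n : ℕ} (a b : Cn n) (r : ℝ) : Set (Cn n) :=
  {z | ∃ t : ℂ, ‖t‖ ≤ r ∧ z = a + t • b}

/-- `u` is plurisubharmonic on the open set `s ⊆ ℂⁿ`:  upper semicontinuous, with values in
`[-∞, ∞)`, not `≡ -∞` on any nonempty open subset, and satisfying the sub-mean value
inequality on every complex disc contained in `s` (expressed via all truncations). -/
structure PshOn {n : ℕ} (u : Cn n → EReal) (s : Set (Cn n)) : Prop where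
  isOpen : IsOpen s
  usc : UpperSemicontinuousOn u s
  ne_top : ∀ z ∈ s, u z ≠ ⊤
  nowhere_bot : ∀ V : Set (Cn n), IsOpen V → V ⊆ s → V.Nonempty → ∃ z ∈ V, u z ≠ ⊥
  submean : ∀ a ∈ s, ∀ (b : Cn n) (r : ℝ), 0 < r → closedDisc a b r ⊆ s →
    ∀ m : ℕ, u a ≤ (((2 * Real.pi)⁻¹ * ∫ θ in (0:ℝ)..(2 * Real.pi),
      trunc u m (a + ((r : ℂ) * Complex.exp (θ * Complex.I)) • b) : ℝ) : EReal)

/-- A plurisubharmonic function on a set `X ⊆ ℂⁿ` (e.g. an analytic subvariety):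
`φ ≢ -∞` on `X`, and near every point of `X`, `φ` is the restriction to `X` of a
plurisubharmonic function on an open neighborhood. Only the values of `φ` on `X` matter. -/
structure PshOnSubset {n : ℕ} (φ : Cn n → EReal) (X : Set (Cn n)) : Prop where
  not_bot : ∃ z ∈ X, φ z ≠ ⊥
  locExt : ∀ z ∈ X, ∃ U : Set (Cn n), IsOpen U ∧ z ∈ U ∧ ∃ v : Cn n → EReal,
    PshOn v U ∧ ∀ w ∈ X ∩ U, φ w = v w

/-- A closed analytic subvariety of `ℂⁿ`. -/
structure IsAnalyticSubvariety {n : ℕ} (X : Set (Cn n)) : Prop where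
  closed : IsClosed X
  locZero : ∀ z ∈ X, ∃ U : Set (Cn n), IsOpen U ∧ z ∈ U ∧ ∃ (k : ℕ) (f : Cn n → Cn k),
    DifferentiableOn ℂ f U ∧ X ∩ U = {w ∈ U | f w = 0}

/-- `u : M → ℝ` is an exhaustion of `M`: all sublevel sets are relatively compact. -/
def ExhaustionOn {n : ℕ} (u : Cn n → ℝ) (M : Set (Cn n)) : Prop :=
  ∀ c : ℝ, Bornology.IsBounded {z ∈ M | u z < c}

end

noncomputable section

/-- The Lelong class `𝓛_γ(X)`: psh functions on `X` with `φ(z) ≤ γ log⁺‖z‖ + C` on `X`.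
(`𝓛_γ(ℂⁿ)` is recovered by taking `X = Set.univ`.) -/
structure MemLelong {n : ℕ} (γ : ℝ) (φ : Cn n → EReal) (X : Set (Cn n)) : Prop where
  psh : PshOnSubset φ X
  growth : ∃ C : ℝ, ∀ z ∈ X, φ z ≤ ((γ * logPlusNorm z + C : ℝ) : EReal)

end

noncomputable section

/-- `log |w|`, with value `-∞` at `w = 0`. -/
def logAbsEReal (w : ℂ) : EReal :=
  if w = 0 then (⊥ : EReal) else ((Real.log ‖w‖ : ℝ) : EReal)


noncomputable section
namespace Stmt17Aux

section Analysis
open intervalIntegral Complex Metric MeasureTheory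

lemma continuous_log_abs_circle {s : ℝ} {z : ℂ} (hs : 0 ≤ s) (habs : ‖z‖ ≠ s) :
    Continuous fun θ : ℝ => Real.log (‖circleMap 0 s θ - z‖) := by
  have hne : ∀ θ : ℝ, circleMap 0 s θ - z ≠ 0 := by
    intro θ h
    rw [sub_eq_zero] at h
    apply habs
    rw [← h, norm_circleMap_zero, _root_.abs_of_nonneg hs]
  have hc : Continuous fun θ : ℝ => ‖circleMap 0 s θ - z‖ :=
    continuous_norm.comp ((continuous_circleMap 0 s).sub continuous_const)
  exact continuous_iff_continuousAt.2 fun θ =>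
    ContinuousAt.comp (x := θ) (Real.continuousAt_log (norm_ne_zero_iff.mpr (hne θ) : ‖circleMap 0 s θ - z‖ ≠ 0)) hc.continuousAt

lemma circle_log_abs_integral_eq {s : ℝ} {z : ℂ} (hs : 0 < s) (hz : s < ‖z‖) :
    ∫ θ in (0:ℝ)..(2*Real.pi), Real.log (‖circleMap 0 s θ - z‖)
      = 2*Real.pi * Real.log (‖z‖) := by
  have hz0 : z ≠ 0 := by
    intro h; rw [h, norm_zero] at hz; linarith
  have habspos : 0 < ‖z‖ := norm_pos_iff.mpr hz0
  set G : ℂ → ℂ := fun t => Complex.log (1 - t / z) with hGdef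
  have hmem : ∀ t : ℂ, ‖t‖ < ‖z‖ → (1 - t / z) ∈ Complex.slitPlane := by
    intro t ht
    rw [Complex.mem_slitPlane_iff]
    left
    have h1 : (1 - t / z).re = 1 - (t / z).re := by simp
    have h2 : (t / z).re ≤ ‖t / z‖ := Complex.re_le_norm _
    have h3 : ‖t / z‖ < 1 := by
      rw [norm_div, div_lt_one habspos]
      exact ht
    rw [h1]; linarith
  have hdiff : ∀ t : ℂ, ‖t‖ < ‖z‖ → DifferentiableAt ℂ G t := by
    intro t ht
    exact (Complex.differentiableAt_log (hmem t ht)).comp t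
      (by fun_prop : DifferentiableAt ℂ (fun t : ℂ => 1 - t / z) t)
  have hGcont : ∀ θ : ℝ, ContinuousAt (fun θ : ℝ => G (circleMap 0 s θ)) θ := by
    intro θ
    have h1 : ‖circleMap 0 s θ‖ < ‖z‖ := by
      rw [norm_circleMap_zero, _root_.abs_of_pos hs]; exact hz
    exact ((hdiff _ h1).continuousAt).comp (continuous_circleMap 0 s).continuousAt
  have key := circleIntegral_sub_center_inv_smul_of_differentiable_on_off_countable hs
    (Set.countable_empty) (f := G) (c := 0)
    (fun t ht => by
      have : ‖t‖ < ‖z‖ := lt_of_le_of_lt (by simpa using mem_closedBall_zero_iff.mp ht) hz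
      exact (hdiff t this).continuousAt.continuousWithinAt)
    (fun t ht => hdiff t (lt_trans (by simpa using mem_ball_zero_iff.mp ht.1) hz))
  have hG0 : G 0 = 0 := by simp [hGdef]
  rw [hG0, smul_zero] at key
  have hne : ∀ θ : ℝ, circleMap 0 s θ ≠ 0 := by
    intro θ h
    exact hs.ne' (circleMap_eq_center_iff.mp h)
  have hunf : (∮ t in C(0, s), (t - 0)⁻¹ • G t)
      = ∫ θ in (0:ℝ)..(2*Real.pi), I * G (circleMap 0 s θ) := by
    rw [circleIntegral]
    apply intervalIntegral.integral_congr
    intro θ _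
    have h0 := hne θ
    simp only [deriv_circleMap, smul_eq_mul, sub_zero]
    field_simp
  rw [hunf] at key
  rw [intervalIntegral.integral_const_mul] at key
  have hGint : IntervalIntegrable (fun θ : ℝ => G (circleMap 0 s θ)) MeasureTheory.volume 0 (2*Real.pi) :=
    (continuous_iff_continuousAt.2 hGcont).intervalIntegrable _ _
  have hInt0 : (∫ θ in (0:ℝ)..(2*Real.pi), G (circleMap 0 s θ)) = 0 :=
    (mul_eq_zero.mp key).resolve_left Complex.I_ne_zero
  have hre : (∫ θ in (0:ℝ)..(2*Real.pi), (G (circleMap 0 s θ)).re) = 0 := by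
    have h := Complex.reCLM.intervalIntegral_comp_comm hGint
    simp only [Complex.reCLM_apply] at h
    rw [h, hInt0, Complex.zero_re]
  have hptw : ∀ θ : ℝ, (G (circleMap 0 s θ)).re
      = Real.log (‖circleMap 0 s θ - z‖) - Real.log (‖z‖) := by
    intro θ
    have h1 : (1 : ℂ) - circleMap 0 s θ / z = (z - circleMap 0 s θ)/z := by
      field_simp
    have hnez : circleMap 0 s θ - z ≠ 0 := by
      intro h
      rw [sub_eq_zero] at h
      have h2 := norm_circleMap_zero s θ
      rw [h, _root_.abs_of_pos hs] at h2
      exact (ne_of_lt hz) h2.symm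
    have hnez' : z - circleMap 0 s θ ≠ 0 := fun h => hnez (by rw [← neg_sub] at h; simpa using neg_eq_zero.mp h)
    rw [hGdef]
    simp only [Complex.log_re, h1, norm_div]
    rw [Real.log_div (norm_ne_zero_iff.mpr hnez') (ne_of_gt habspos), norm_sub_rev]
  have hcongr : (∫ θ in (0:ℝ)..(2*Real.pi), (G (circleMap 0 s θ)).re)
      = ∫ θ in (0:ℝ)..(2*Real.pi), (Real.log (‖circleMap 0 s θ - z‖) - Real.log (‖z‖)) :=
    intervalIntegral.integral_congr fun θ _ => hptw θ
  rw [hcongr] at hre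
  have hLint : IntervalIntegrable (fun θ : ℝ => Real.log (‖circleMap 0 s θ - z‖))
      MeasureTheory.volume 0 (2*Real.pi) :=
    (continuous_log_abs_circle hs.le (ne_of_gt hz)).intervalIntegrable _ _
  rw [intervalIntegral.integral_sub hLint intervalIntegrable_const, intervalIntegral.integral_const] at hre
  simp only [smul_eq_mul, sub_zero] at hre
  linarith [hre]

lemma circle_log_abs_integral_ge {s : ℝ} {z : ℂ} (hs : 0 < s) (hz0 : z ≠ 0)
    (hne : ‖z‖ ≠ s) :
    2*Real.pi * Real.log (‖z‖)
      ≤ ∫ θ in (0:ℝ)..(2*Real.pi), Real.log (‖circleMap 0 s θ - z‖) := by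
  have habspos : 0 < ‖z‖ := norm_pos_iff.mpr hz0
  rcases lt_or_gt_of_ne hne with hlt | hgt
  · -- |z| < s : reflection
    set w : ℂ := (s:ℂ)^2 / (starRingEnd ℂ z) with hw
    have hconjz : (starRingEnd ℂ z) ≠ 0 := by simpa using hz0
    have habsw : ‖w‖ = s^2 / ‖z‖ := by
      rw [hw, norm_div, Complex.norm_conj]
      congr 1
      simp [Complex.norm_real, abs_of_pos hs, sq_abs]
    have hws : s < ‖w‖ := by
      rw [habsw, lt_div_iff₀ habspos]
      nlinarith
    have hptw : ∀ θ : ℝ, Real.log (‖circleMap 0 s θ - z‖)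
        = Real.log (‖z‖) - Real.log s + Real.log (‖circleMap 0 s θ - w‖) := by
      intro θ
      have hcm : ‖circleMap 0 s θ‖ = s := by
        rw [norm_circleMap_zero, _root_.abs_of_pos hs]
      have hkey : (circleMap 0 s θ - w) * (starRingEnd ℂ z)
          = circleMap 0 s θ * (starRingEnd ℂ (z - circleMap 0 s θ)) := by
        have hsq : circleMap 0 s θ * starRingEnd ℂ (circleMap 0 s θ) = ((s:ℂ))^2 := by
          rw [Complex.mul_conj]
          rw [Complex.normSq_eq_norm_sq, hcm]
          push_cast
          ring
        rw [map_sub]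
        rw [sub_mul, hw, div_mul_cancel₀ _ hconjz, mul_sub, hsq]
      have habs : ‖circleMap 0 s θ - w‖ * ‖z‖
          = s * ‖circleMap 0 s θ - z‖ := by
        have := congrArg (‖·‖) hkey
        rw [norm_mul, norm_mul, Complex.norm_conj, Complex.norm_conj, hcm] at this
        rw [this, norm_sub_rev]
      have hnzw : ‖circleMap 0 s θ - w‖ ≠ 0 := by
        intro h
        rw [norm_eq_zero, sub_eq_zero] at h
        rw [← h, hcm] at hws
        exact lt_irrefl _ hws
      have hval : ‖circleMap 0 s θ - z‖
          = ‖z‖ / s * ‖circleMap 0 s θ - w‖ := by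
        rw [div_mul_eq_mul_div, eq_div_iff (ne_of_gt hs), mul_comm (‖circleMap 0 s θ - z‖) s, ← habs]
        ring
      rw [hval, Real.log_mul (by positivity) hnzw, Real.log_div (ne_of_gt habspos) (ne_of_gt hs)]
    have hIcongr : (∫ θ in (0:ℝ)..(2*Real.pi), Real.log (‖circleMap 0 s θ - z‖))
        = ∫ θ in (0:ℝ)..(2*Real.pi), (Real.log (‖z‖) - Real.log s
            + Real.log (‖circleMap 0 s θ - w‖)) :=
      intervalIntegral.integral_congr fun θ _ => hptw θ
    have hwint : IntervalIntegrable (fun θ : ℝ => Real.log (‖circleMap 0 s θ - w‖))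
        MeasureTheory.volume 0 (2*Real.pi) :=
      (continuous_log_abs_circle hs.le (ne_of_gt hws)).intervalIntegrable _ _
    rw [hIcongr, intervalIntegral.integral_add (intervalIntegrable_const) hwint,
      intervalIntegral.integral_const, circle_log_abs_integral_eq hs hws, habsw,
      Real.log_div (by positivity) (ne_of_gt habspos), Real.log_pow]
    simp only [smul_eq_mul, sub_zero]
    have hlogs : Real.log (‖z‖) ≤ Real.log s := Real.log_le_log habspos hlt.le
    have hpi : 0 < 2*Real.pi := by positivity
    push_cast
    nlinarith [hpi, hlogs]
  · rw [circle_log_abs_integral_eq hs hgt]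

lemma list_log_circle {s : ℝ} (hs : 0 < s) {l : ℂ} (hl : l ≠ 0) (L : List ℂ)
    (hL : ∀ z ∈ L, z ≠ 0 ∧ ‖z‖ ≠ s) :
    (Continuous fun θ : ℝ =>
        Real.log (‖l * (L.map (fun z => circleMap 0 s θ - z)).prod‖)) ∧
    2*Real.pi * Real.log (‖l * (L.map (fun z => (0:ℂ) - z)).prod‖)
      ≤ ∫ θ in (0:ℝ)..(2*Real.pi),
          Real.log (‖l * (L.map (fun z => circleMap 0 s θ - z)).prod‖) := by
  induction L with
  | nil =>
    constructor
    · simpa using continuous_const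
    · simp only [List.map_nil, List.prod_nil, mul_one, intervalIntegral.integral_const,
        smul_eq_mul, sub_zero]
      exact le_refl _
  | cons z L ih =>
    obtain ⟨hz0, hzs⟩ := hL z List.mem_cons_self
    have hL' : ∀ w ∈ L, w ≠ 0 ∧ ‖w‖ ≠ s := fun w hw => hL w (List.mem_cons_of_mem _ hw)
    obtain ⟨ihc, ihi⟩ := ih hL'
    -- nonvanishing of tail product at circle points and at 0
    have hcircne : ∀ θ : ℝ, ∀ w : ℂ, ‖w‖ ≠ s → circleMap 0 s θ - w ≠ 0 := by
      intro θ w hws h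
      rw [sub_eq_zero] at h
      exact hws (by rw [← h, norm_circleMap_zero, _root_.abs_of_pos hs])
    have htail : ∀ t : ℂ, (∀ w ∈ L, t - w ≠ 0) → l * (L.map (fun w => t - w)).prod ≠ 0 := by
      intro t ht
      refine mul_ne_zero hl fun h => ?_
      rw [List.prod_eq_zero_iff] at h
      obtain ⟨w, hw, hw'⟩ := List.mem_map.mp h
      exact ht w hw hw'
    have htailc : ∀ θ : ℝ, l * (L.map (fun w => circleMap 0 s θ - w)).prod ≠ 0 :=
      fun θ => htail _ (fun w hw => hcircne θ w (hL' w hw).2)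
    have htail0 : l * (L.map (fun w => (0:ℂ) - w)).prod ≠ 0 := by
      refine htail _ (fun w hw h => (hL' w hw).1 (by rwa [zero_sub, neg_eq_zero] at h))
    -- pointwise splitting on the circle
    have hsplit : ∀ θ : ℝ,
        Real.log (‖l * ((z :: L).map (fun w => circleMap 0 s θ - w)).prod‖)
          = Real.log (‖circleMap 0 s θ - z‖)
            + Real.log (‖l * (L.map (fun w => circleMap 0 s θ - w)).prod‖) := by
      intro θ
      rw [List.map_cons, List.prod_cons, show l * ((circleMap 0 s θ - z) *
          (L.map (fun w => circleMap 0 s θ - w)).prod) = (circleMap 0 s θ - z) *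
          (l * (L.map (fun w => circleMap 0 s θ - w)).prod) by ring, norm_mul,
        Real.log_mul (norm_ne_zero_iff.mpr (hcircne θ z hzs)) (norm_ne_zero_iff.mpr (htailc θ))]
    have hcont : Continuous fun θ : ℝ =>
        Real.log (‖l * ((z :: L).map (fun w => circleMap 0 s θ - w)).prod‖) := by
      have := (continuous_log_abs_circle hs.le hzs).add ihc
      refine Continuous.congr this fun θ => (hsplit θ).symm
    refine ⟨hcont, ?_⟩
    have hint1 : IntervalIntegrable (fun θ : ℝ => Real.log (‖circleMap 0 s θ - z‖))
        MeasureTheory.volume 0 (2*Real.pi) :=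
      (continuous_log_abs_circle hs.le hzs).intervalIntegrable _ _
    have hint2 : IntervalIntegrable (fun θ : ℝ =>
        Real.log (‖l * (L.map (fun w => circleMap 0 s θ - w)).prod‖))
        MeasureTheory.volume 0 (2*Real.pi) := ihc.intervalIntegrable _ _
    rw [intervalIntegral.integral_congr (fun θ _ => hsplit θ),
      intervalIntegral.integral_add hint1 hint2]
    have hlhs : Real.log (‖l * ((z :: L).map (fun w => (0:ℂ) - w)).prod‖)
        = Real.log (‖z‖)
          + Real.log (‖l * (L.map (fun w => (0:ℂ) - w)).prod‖) := by
      rw [List.map_cons, List.prod_cons, show l * (((0:ℂ) - z) *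
          (L.map (fun w => (0:ℂ) - w)).prod) = ((0:ℂ) - z) *
          (l * (L.map (fun w => (0:ℂ) - w)).prod) by ring, norm_mul]
      rw [Real.log_mul (by simpa using norm_ne_zero_iff.mpr (sub_ne_zero.mpr (Ne.symm hz0))) (norm_ne_zero_iff.mpr htail0)]
      simp
    rw [hlhs, mul_add]
    exact add_le_add (circle_log_abs_integral_ge hs hz0 hzs) ihi

lemma poly_circle_log (p : Polynomial ℂ) (hp0 : p.eval 0 ≠ 0) {s : ℝ} (hs : 0 < s)
    (hclean : ∀ z ∈ p.roots, ‖z‖ ≠ s) :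
    (Continuous fun θ : ℝ => Real.log (‖p.eval (circleMap 0 s θ)‖)) ∧
    2*Real.pi * Real.log (‖p.eval 0‖)
      ≤ ∫ θ in (0:ℝ)..(2*Real.pi), Real.log (‖p.eval (circleMap 0 s θ)‖) := by
  have hp : p ≠ 0 := fun h => hp0 (by simp [h])
  have hl : p.leadingCoeff ≠ 0 := Polynomial.leadingCoeff_ne_zero.mpr hp
  set L := p.roots.toList with hLdef
  have hLprop : ∀ z ∈ L, z ≠ 0 ∧ ‖z‖ ≠ s := by
    intro z hz
    have hr : z ∈ p.roots := Multiset.mem_toList.mp hz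
    refine ⟨fun h => hp0 ?_, hclean z hr⟩
    have := Polynomial.isRoot_of_mem_roots hr
    rwa [h] at this
  have heval : ∀ t : ℂ, p.eval t = p.leadingCoeff * (L.map (fun z => t - z)).prod := by
    intro t
    conv_lhs => rw [Polynomial.Splits.eq_prod_roots (IsAlgClosed.splits p)]
    rw [Polynomial.eval_mul, Polynomial.eval_C, Polynomial.eval_multiset_prod]
    congr 1
    rw [Multiset.map_map]
    simp only [Function.comp_def, Polynomial.eval_sub, Polynomial.eval_X, Polynomial.eval_C]
    conv_lhs => rw [← Multiset.coe_toList p.roots]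
    rw [Multiset.map_coe, Multiset.prod_coe]
  obtain ⟨hc, hi⟩ := list_log_circle hs hl L hLprop
  constructor
  · refine Continuous.congr hc fun θ => ?_
    rw [heval]
  · calc 2*Real.pi * Real.log (‖p.eval 0‖)
        = 2*Real.pi * Real.log (‖p.leadingCoeff * (L.map (fun z => (0:ℂ) - z)).prod‖) := by rw [heval]
      _ ≤ _ := by
          refine le_trans hi (le_of_eq ?_)
          exact intervalIntegral.integral_congr fun θ _ => by rw [heval]

lemma poly_trunc_circle_ge (p : Polynomial ℂ) {r c m' : ℝ} (hr : 0 < r) (hc : 0 < c)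
    (hm : 0 ≤ m') (hp0 : p.eval 0 ≠ 0) :
    2*Real.pi * (c * Real.log (‖p.eval 0‖))
      ≤ ∫ θ in (0:ℝ)..(2*Real.pi),
          (if p.eval (circleMap 0 r θ) = 0 then -m'
           else max (c * Real.log (‖p.eval (circleMap 0 r θ)‖)) (-m')) := by
  set L : ℝ := 2*Real.pi * (c * Real.log (‖p.eval 0‖)) with hL
  set h : ℝ → ℝ → ℝ := fun s θ =>
    max (c * Real.log (‖p.eval (circleMap 0 s θ)‖)) (-m') with hh
  -- clean radii give the bound
  have hcleanCase : ∀ s : ℝ, 0 < s → (∀ z ∈ p.roots, ‖z‖ ≠ s) →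
      (Continuous (h s)) ∧ L ≤ ∫ θ in (0:ℝ)..(2*Real.pi), h s θ := by
    intro s hs hclean
    obtain ⟨hcont, hint⟩ := poly_circle_log p hp0 hs hclean
    have hhc : Continuous (h s) := (continuous_const.mul hcont).max continuous_const
    refine ⟨hhc, ?_⟩
    have h1 : (∫ θ in (0:ℝ)..(2*Real.pi), c * Real.log (‖p.eval (circleMap 0 s θ)‖))
        ≤ ∫ θ in (0:ℝ)..(2*Real.pi), h s θ := by
      refine intervalIntegral.integral_mono_on (by positivity) ?_ (hhc.intervalIntegrable _ _) ?_
      · exact (continuous_const.mul hcont).intervalIntegrable _ _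
      · intro θ _; exact le_max_left _ _
    have h2 : L ≤ ∫ θ in (0:ℝ)..(2*Real.pi), c * Real.log (‖p.eval (circleMap 0 s θ)‖) := by
      rw [intervalIntegral.integral_const_mul, hL]
      calc 2*Real.pi * (c * Real.log (‖p.eval 0‖))
          = c * (2*Real.pi * Real.log (‖p.eval 0‖)) := by ring
        _ ≤ c * ∫ θ in (0:ℝ)..(2*Real.pi), Real.log (‖p.eval (circleMap 0 s θ)‖) :=
            mul_le_mul_of_nonneg_left hint hc.le
    linarith
  -- uniform bound
  obtain ⟨M, hM⟩ := (isCompact_closedBall (0:ℂ) r).exists_bound_of_continuousOn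
    (Continuous.continuousOn (by continuity : Continuous fun t : ℂ => p.eval t))
  set M' : ℝ := max M 1 with hM'
  have hM'1 : (1:ℝ) ≤ M' := le_max_right _ _
  have hbd : ∀ s : ℝ, 0 < s → s ≤ r → ∀ θ : ℝ, |h s θ| ≤ max (c * Real.log M') m' := by
    intro s hs hsr θ
    have hmem : circleMap 0 s θ ∈ closedBall (0:ℂ) r := by
      simp only [mem_closedBall, dist_zero_right]
      rw [norm_circleMap_zero, _root_.abs_of_pos hs]
      exact hsr
    have hub : c * Real.log (‖p.eval (circleMap 0 s θ)‖) ≤ c * Real.log M' := by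
      refine mul_le_mul_of_nonneg_left ?_ hc.le
      rcases eq_or_ne (p.eval (circleMap 0 s θ)) 0 with hz | hz
      · rw [hz]; simpa using Real.log_nonneg hM'1
      · refine Real.log_le_log (norm_pos_iff.mpr hz) ?_
        calc ‖p.eval (circleMap 0 s θ)‖ = ‖p.eval (circleMap 0 s θ)‖ := rfl
          _ ≤ M := hM _ hmem
          _ ≤ M' := le_max_left _ _
    rw [abs_le]
    constructor
    · calc -(max (c * Real.log M') m') ≤ -m' := by simp [le_max_right]
        _ ≤ h s θ := le_max_right _ _
    · calc h s θ ≤ max (c * Real.log M') (-m') := max_le_max hub (le_refl _)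
        _ ≤ max (c * Real.log M') m' := max_le_max (le_refl _) (by linarith)
  -- the bad set of radii
  have hfin : ({s : ℝ | ∃ z ∈ p.roots, ‖z‖ = s}).Finite := by
    have heq : ({s : ℝ | ∃ z ∈ p.roots, ‖z‖ = s}) = (fun z : ℂ => ‖z‖) '' (p.roots.toFinset : Set ℂ) := by
      ext s; simp [eq_comm, Multiset.mem_toFinset]
    rw [heq]
    exact (p.roots.toFinset.finite_toSet).image _
  -- a sequence of clean radii increasing to r
  have hseq : ∀ n : ℕ, ∃ s : ℝ, (max (r/2) (r - 1/(n+1)) < s ∧ s < r)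
      ∧ ¬ (∃ z ∈ p.roots, ‖z‖ = s) := by
    intro n
    have h1 : (0:ℝ) < 1/(n+1) := by positivity
    have hlt : max (r/2) (r - 1/(n+1)) < r := max_lt (by linarith) (by linarith)
    have hinf : (Set.Ioo (max (r/2) (r - 1/(n+1))) r).Infinite :=
      Set.infinite_coe_iff.mp (Set.Ioo.infinite hlt)
    obtain ⟨s, hs⟩ := (hinf.diff hfin).nonempty
    exact ⟨s, hs.1, hs.2⟩
  choose sn hsn hsnclean using hseq
  have hsnpos : ∀ n, 0 < sn n := fun n =>
    lt_of_le_of_lt (by positivity : (0:ℝ) ≤ r/2) (lt_of_le_of_lt (le_max_left _ _) (hsn n).1)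
  have hsnr : ∀ n, sn n ≤ r := fun n => (hsn n).2.le
  have hsnclean' : ∀ n, ∀ z ∈ p.roots, ‖z‖ ≠ sn n := by
    intro n z hz h
    exact hsnclean n ⟨z, hz, h⟩
  have hsn_tendsto : Tendsto sn atTop (𝓝 r) := by
    have hlow : Tendsto (fun n : ℕ => r - 1/(n+1)) atTop (𝓝 r) := by
      have := tendsto_one_div_add_atTop_nhds_zero_nat (𝕜 := ℝ)
      have h2 := (tendsto_const_nhds (x := r) (f := atTop (α := ℕ))).sub this
      simpa using h2
    refine tendsto_of_tendsto_of_tendsto_of_le_of_le hlow tendsto_const_nhds ?_ ?_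
    · exact fun n => (le_trans (le_max_right _ _) (le_of_lt (hsn n).1))
    · exact fun n => (hsn n).2.le
  -- the null set of angles hitting roots at radius r
  set N : Set ℝ := {θ : ℝ | p.eval (circleMap 0 r θ) = 0} with hN
  have hNc : N.Countable := by
    have hsub : N ⊆ ⋃ z ∈ (p.roots.toFinset : Set ℂ), {θ : ℝ | circleMap 0 r θ = z} := by
      intro θ hθ
      have hroot : circleMap 0 r θ ∈ p.roots := by
        rw [Polynomial.mem_roots']
        exact ⟨fun h => hp0 (by simp [h]), hθ⟩
      simp only [Set.mem_iUnion]
      exact ⟨circleMap 0 r θ, by simpa [Multiset.mem_toFinset] using hroot, rfl⟩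
    refine Set.Countable.mono hsub ?_
    refine Set.Countable.biUnion ((p.roots.toFinset.finite_toSet).countable) ?_
    · intro z _
      rcases Set.eq_empty_or_nonempty {θ : ℝ | circleMap 0 r θ = z} with he | ⟨θ₀, hθ₀⟩
      · rw [he]; exact Set.countable_empty
      · refine Set.Countable.mono ?_ (Set.countable_range fun n : ℤ => θ₀ + n * (2*Real.pi))
        intro θ hθ
        have h1 : circleMap 0 r θ = circleMap 0 r θ₀ := by
          rw [hθ, hθ₀]
        have h2 : Complex.exp (θ * I) = Complex.exp (θ₀ * I) := by
          have := h1
          simp only [circleMap, zero_add] at this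
          have hr' : (r:ℂ) ≠ 0 := by exact_mod_cast hr.ne'
          exact mul_left_cancel₀ hr' this
        rw [Complex.exp_eq_exp_iff_exists_int] at h2
        obtain ⟨n, hn⟩ := h2
        refine ⟨n, ?_⟩
        have h3 : (θ:ℂ) * I = ((θ₀:ℂ) + (n:ℂ)*(2*Real.pi)) * I := by
          rw [hn]; push_cast; ring
        have h4 : (θ:ℂ) = (θ₀:ℂ) + (n:ℂ)*(2*Real.pi) := mul_right_cancel₀ Complex.I_ne_zero h3
        have h5 : θ = θ₀ + (n:ℝ)*(2*Real.pi) := by exact_mod_cast h4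
        simp [h5]
  have hNmeas : MeasureTheory.volume N = 0 := hNc.measure_zero _
  have hpc : Continuous fun t : ℂ => p.eval t := by continuity
  set T : ℝ → ℝ := fun θ => if p.eval (circleMap 0 r θ) = 0 then -m' else h r θ with hT
  have hFcont : ∀ n, Continuous (h (sn n)) := fun n => (hcleanCase _ (hsnpos n) (hsnclean' n)).1
  have htend : Tendsto (fun n => ∫ θ in (0:ℝ)..(2*Real.pi), h (sn n) θ) atTop
      (𝓝 (∫ θ in (0:ℝ)..(2*Real.pi), T θ)) := by
    refine intervalIntegral.tendsto_integral_filter_of_dominated_convergence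
      (fun _ => max (c * Real.log M') m') ?_ ?_ ?_ ?_
    · exact Eventually.of_forall fun n => (hFcont n).aestronglyMeasurable
    · exact Eventually.of_forall fun n => (Eventually.of_forall fun θ _ => by
        simpa [Real.norm_eq_abs] using hbd (sn n) (hsnpos n) (hsnr n) θ)
    · exact intervalIntegrable_const
    · have hae : ∀ᵐ θ : ℝ ∂MeasureTheory.volume, θ ∉ N := by
        rw [MeasureTheory.ae_iff]
        simpa [not_not] using hNmeas
      filter_upwards [hae] with θ hθ
      intro _
      have hne : p.eval (circleMap 0 r θ) ≠ 0 := hθ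
      have hTθ : T θ = h r θ := by rw [hT]; simp only [if_neg hne]
      rw [hTθ]
      have h1 : Continuous fun s : ℝ => circleMap 0 s θ := by
        simp only [circleMap, zero_add]
        exact Complex.continuous_ofReal.mul continuous_const
      have h2 : ContinuousAt (fun s : ℝ => ‖p.eval (circleMap 0 s θ)‖) r :=
        ((continuous_norm.comp (hpc.comp h1))).continuousAt
      have h3 : ContinuousAt (fun s : ℝ => Real.log (‖p.eval (circleMap 0 s θ)‖)) r :=
        ContinuousAt.comp (x := r) (Real.continuousAt_log (norm_ne_zero_iff.mpr hne : ‖p.eval (circleMap 0 r θ)‖ ≠ 0)) h2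
      have hcontS : ContinuousAt (fun s : ℝ => h s θ) r :=
        (ContinuousAt.mul continuousAt_const h3).max continuousAt_const
      exact (hcontS.tendsto).comp hsn_tendsto
  have hge : L ≤ ∫ θ in (0:ℝ)..(2*Real.pi), T θ :=
    ge_of_tendsto' htend fun n => (hcleanCase _ (hsnpos n) (hsnclean' n)).2
  exact hge

end Analysis

section Algebra
open MvPolynomial

def Qk (k : ℕ) : MvPolynomial (Fin 2) ℂ :=
  ∑ j ∈ Finset.range (3 * k + 1),
    MvPolynomial.C ((Nat.choose (3 * k) j : ℂ)) *
      MvPolynomial.X 0 ^ (j / 3) * MvPolynomial.X 1 ^ (j % 3)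

lemma Qk_term (c : ℂ) (a b : ℕ) :
    MvPolynomial.C c * MvPolynomial.X (0 : Fin 2) ^ a * MvPolynomial.X 1 ^ b
      = MvPolynomial.monomial (Finsupp.single 0 a + Finsupp.single 1 b) c := by
  rw [X_pow_eq_monomial, X_pow_eq_monomial, C_apply, monomial_mul, monomial_mul]
  simp

lemma Qk_eval (k : ℕ) (y : ℂ) :
    MvPolynomial.eval ![y ^ 3, y] (Qk k) = (y + 1) ^ (3 * k) := by
  rw [Qk, map_sum, add_pow]
  refine Finset.sum_congr rfl fun j hj => ?_
  rw [Finset.mem_range] at hj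
  simp only [map_mul, map_pow, eval_C, eval_X]
  rw [Matrix.cons_val_zero, Matrix.cons_val_one, Matrix.cons_val_zero, one_pow, ← pow_mul,
    mul_assoc, ← pow_add, show 3*(j/3) + j % 3 = j by omega]
  ring

lemma Qk_coeff (k : ℕ) (hk : 1 ≤ k) :
    MvPolynomial.coeff (Finsupp.single (0 : Fin 2) (k - 1) + Finsupp.single (1 : Fin 2) 2) (Qk k)
      = (3 * k : ℂ) := by
  rw [Qk, coeff_sum]
  rw [Finset.sum_eq_single (3 * k - 1)]
  · rw [Qk_term, show (3*k-1)/3 = k - 1 by omega, show (3*k-1) % 3 = 2 by omega,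
      coeff_monomial, if_pos rfl]
    have h1 : (3*k).choose (3*k-1) = 3*k := by
      have := Nat.choose_symm (show 1 ≤ 3*k by omega)
      rw [this, Nat.choose_one_right]
    rw [h1]
    push_cast; ring
  · intro j hj hne
    rw [Finset.mem_range] at hj
    rw [Qk_term, coeff_monomial, if_neg]
    intro h
    have h0 := congrArg (fun g : Fin 2 →₀ ℕ => g 0) h
    have h1 := congrArg (fun g : Fin 2 →₀ ℕ => g 1) h
    simp [Finsupp.single_apply] at h0 h1
    omega
  · intro h
    exact absurd (Finset.mem_range.mpr (by omega)) h

lemma Qk_ne_zero (k : ℕ) (hk : 1 ≤ k) : Qk k ≠ 0 := by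
  intro h
  have := Qk_coeff k hk
  rw [h, MvPolynomial.coeff_zero] at this
  have h2 : (3*k : ℕ) = 0 := by exact_mod_cast this.symm
  omega

lemma Qk_deg (k : ℕ) (hk : 1 ≤ k) : (Qk k).totalDegree = k + 1 := by
  refine le_antisymm ?_ ?_
  · refine le_trans (totalDegree_finset_sum _ _) ?_
    refine Finset.sup_le fun j hj => ?_
    rw [Finset.mem_range] at hj
    rw [Qk_term, totalDegree_monomial _ (by exact_mod_cast (Nat.choose_pos (by omega : j ≤ 3*k)).ne')]
    rw [Finsupp.sum_add_index' (fun _ => rfl) (fun _ _ _ => rfl),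
      Finsupp.sum_single_index rfl, Finsupp.sum_single_index rfl]
    omega
  · have hco := Qk_coeff k hk
    have hne : MvPolynomial.coeff (Finsupp.single (0 : Fin 2) (k - 1) + Finsupp.single (1 : Fin 2) 2) (Qk k) ≠ 0 := by
      rw [hco]
      exact_mod_cast Nat.cast_ne_zero.mpr (by omega : 3*k ≠ 0)
    have hsup := MvPolynomial.le_totalDegree (p := Qk k) (MvPolynomial.mem_support_iff.mpr hne)
    rw [Finsupp.sum_add_index' (fun _ => rfl) (fun _ _ _ => rfl),
      Finsupp.sum_single_index rfl, Finsupp.sum_single_index rfl] at hsup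
    omega

end Algebra

def lineP (Q : MvPolynomial (Fin 2) ℂ) (a b : Cn 2) : Polynomial ℂ :=
  MvPolynomial.eval₂ Polynomial.C (fun i => Polynomial.C (a i) + Polynomial.X * Polynomial.C (b i)) Q

lemma lineP_eval (Q : MvPolynomial (Fin 2) ℂ) (a b : Cn 2) (t : ℂ) :
    (lineP Q a b).eval t = MvPolynomial.eval (a + t • b) Q := by
  rw [lineP]
  have h := MvPolynomial.eval₂_comp_left (Polynomial.evalRingHom t) Polynomial.C
    (fun i => Polynomial.C (a i) + Polynomial.X * Polynomial.C (b i)) Q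
  simp only [Polynomial.coe_evalRingHom] at h
  rw [h]
  have hcomp : (Polynomial.evalRingHom t).comp Polynomial.C = RingHom.id ℂ := by
    ext x; simp
  rw [hcomp]
  have hfun : ((Polynomial.eval t) ∘ fun i : Fin 2 => Polynomial.C (a i) + Polynomial.X * Polynomial.C (b i))
      = fun i : Fin 2 => (a + t • b) i := by
    funext i
    simp only [Function.comp_apply, Polynomial.eval_add, Polynomial.eval_mul, Polynomial.eval_C,
      Polynomial.eval_X, Pi.add_apply, Pi.smul_apply, smul_eq_mul, mul_comm t (b i)]
  rw [hfun]
  rfl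

lemma logAbsEReal_mul_pos {c : ℝ} (hc : 0 < c) (w : ℂ) :
    ((c:ℝ):EReal) * logAbsEReal w
      = if w = 0 then (⊥:EReal) else ((c * Real.log (‖w‖) : ℝ) : EReal) := by
  rw [logAbsEReal]
  split_ifs with h
  · exact EReal.mul_bot_of_pos (by exact_mod_cast hc)
  · rw [← EReal.coe_mul]

lemma psik_ne_top {c : ℝ} (hc : 0 < c) (w : ℂ) : ((c:ℝ):EReal) * logAbsEReal w ≠ ⊤ := by
  rw [logAbsEReal_mul_pos hc]
  split_ifs
  · exact bot_ne_top
  · exact EReal.coe_ne_top _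

lemma psik_ne_bot {c : ℝ} (hc : 0 < c) {w : ℂ} (hw : w ≠ 0) :
    ((c:ℝ):EReal) * logAbsEReal w ≠ ⊥ := by
  rw [logAbsEReal_mul_pos hc, if_neg hw]
  exact EReal.coe_ne_bot _

theorem psh_univ (Q : MvPolynomial (Fin 2) ℂ) (hQ : Q ≠ 0) {c : ℝ} (hc : 0 < c) :
    PshOn (fun z => ((c:ℝ):EReal) * logAbsEReal (MvPolynomial.eval z Q)) Set.univ := by
  set ψ : Cn 2 → EReal := fun z => ((c:ℝ):EReal) * logAbsEReal (MvPolynomial.eval z Q) with hψ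
  have hfc : Continuous fun z : Cn 2 => MvPolynomial.eval z Q := MvPolynomial.continuous_eval Q
  constructor
  · exact isOpen_univ
  · -- upper semicontinuity
    refine UpperSemicontinuous.upperSemicontinuousOn ?_ _
    intro z y hy
    rcases eq_or_ne (MvPolynomial.eval z Q) 0 with hz | hz
    · -- ψ z = ⊥
      induction y with
      | bot =>
        rw [hψ] at hy; simp only [logAbsEReal_mul_pos hc, if_pos hz] at hy
        exact absurd hy not_lt_bot
      | coe yr =>
        have hev : ∀ᶠ w in 𝓝 z, ‖MvPolynomial.eval w Q‖ < Real.exp (yr / c) := by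
          have htend : Tendsto (fun w => ‖MvPolynomial.eval w Q‖) (𝓝 z)
              (𝓝 (‖MvPolynomial.eval z Q‖)) :=
            (continuous_norm.comp hfc).continuousAt
          rw [hz, norm_zero] at htend
          exact htend.eventually_lt_const (Real.exp_pos _)
        filter_upwards [hev] with w hw
        rw [hψ]
        simp only [logAbsEReal_mul_pos hc]
        split_ifs with h
        · exact EReal.bot_lt_coe _
        · rw [EReal.coe_lt_coe_iff]
          have habs : 0 < ‖MvPolynomial.eval w Q‖ := norm_pos_iff.mpr h
          have hlog : Real.log (‖MvPolynomial.eval w Q‖) < yr / c := by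
            have := Real.log_lt_log habs hw
            rwa [Real.log_exp] at this
          calc c * Real.log (‖MvPolynomial.eval w Q‖) < c * (yr / c) :=
              (mul_lt_mul_iff_right₀ hc).mpr hlog
            _ = yr := by field_simp
      | top =>
        refine Eventually.of_forall fun w => ?_
        exact lt_of_le_of_ne le_top (psik_ne_top hc _)
    · -- continuity point
      have hev : ∀ᶠ w in 𝓝 z, MvPolynomial.eval w Q ≠ 0 :=
        hfc.continuousAt.eventually_ne hz
      have hgc : ContinuousAt (fun w => c * Real.log (‖MvPolynomial.eval w Q‖)) z := by
        refine ContinuousAt.mul continuousAt_const ?_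
        exact ContinuousAt.comp (x := z) (Real.continuousAt_log (norm_ne_zero_iff.mpr hz : ‖MvPolynomial.eval z Q‖ ≠ 0))
          (continuous_norm.comp hfc).continuousAt
      have hψz : ψ z = ((c * Real.log (‖MvPolynomial.eval z Q‖) : ℝ) : EReal) := by
        rw [hψ]; simp only [logAbsEReal_mul_pos hc, if_neg hz]
      induction y with
      | bot => rw [hψz] at hy; exact absurd hy (by simp)
      | coe yr =>
        rw [hψz, EReal.coe_lt_coe_iff] at hy
        have := hgc.tendsto.eventually_lt_const hy
        filter_upwards [this, hev] with w hw hwne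
        rw [hψ]
        simp only [logAbsEReal_mul_pos hc, if_neg hwne, EReal.coe_lt_coe_iff]
        exact hw
      | top =>
        exact Eventually.of_forall fun w => lt_of_le_of_ne le_top (psik_ne_top hc _)
  · exact fun z _ => psik_ne_top hc _
  · -- nowhere ⊥
    intro V hV _ ⟨a, ha⟩
    obtain ⟨ε, hε, hball⟩ := Metric.isOpen_iff.mp hV a ha
    have hwex : ∃ w : Cn 2, MvPolynomial.eval w Q ≠ 0 := by
      by_contra hall
      push_neg at hall
      exact hQ (MvPolynomial.funext fun x => by rw [hall x, map_zero])
    obtain ⟨w, hw⟩ := hwex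
    set g : Polynomial ℂ := lineP Q a (w - a) with hg
    have hg1 : g.eval 1 ≠ 0 := by
      rw [hg, lineP_eval]
      have : a + (1:ℂ) • (w - a) = w := by
        funext i; simp
      rwa [this]
    have hgne : g ≠ 0 := fun h => hg1 (by rw [h, Polynomial.eval_zero])
    have hfin := Polynomial.finite_setOf_isRoot hgne
    set D : ℝ := ‖w - a‖ + 1 with hD
    have hD1 : 0 < D := by positivity
    set f : ℕ → ℂ := fun n => ((ε / ((n+1) * D) : ℝ) : ℂ) with hf
    have hinj : Function.Injective f := by
      intro n1 n2 h
      have h2 : (ε / ((n1+1) * D) : ℝ) = ε / ((n2+1) * D) := by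
        refine Complex.ofReal_inj.mp ?_
        simpa [hf] using h
      have e1 : (0:ℝ) < ((n1:ℝ)+1) * D := by positivity
      have e2 : (0:ℝ) < ((n2:ℝ)+1) * D := by positivity
      rw [div_eq_div_iff e1.ne' e2.ne'] at h2
      have h3 := mul_left_cancel₀ hε.ne' h2
      have h4 := mul_right_cancel₀ hD1.ne' h3
      have : (n2:ℝ) = n1 := by linarith
      exact_mod_cast this.symm
    have hex : ∃ n : ℕ, ¬ g.IsRoot (f n) := by
      by_contra hall
      push_neg at hall
      have hsub : Set.range f ⊆ {x | g.IsRoot x} := by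
        rintro x ⟨n, rfl⟩; exact hall n
      exact (Set.infinite_range_of_injective hinj) (hfin.subset hsub)
    obtain ⟨n, hn⟩ := hex
    refine ⟨a + (f n) • (w - a), ?_, ?_⟩
    · apply hball
      rw [Metric.mem_ball, dist_eq_norm, add_sub_cancel_left, norm_smul]
      have hfn : ‖f n‖ = ε / ((n+1) * D) := by
        rw [hf]
        simp only [Complex.norm_real]
        exact _root_.abs_of_pos (by positivity)
      rw [hfn]
      have hwa : ‖w - a‖ < D := by rw [hD]; linarith [norm_nonneg (w - a)]
      have hn1 : (1:ℝ) ≤ (n:ℝ) + 1 := by linarith [Nat.cast_nonneg (α := ℝ) n]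
      rw [div_mul_eq_mul_div, div_lt_iff₀ (by positivity)]
      have : ‖w - a‖ < ((n:ℝ)+1) * D := by nlinarith [norm_nonneg (w - a)]
      nlinarith [hε]
    · have : MvPolynomial.eval (a + (f n) • (w - a)) Q ≠ 0 := by
        rw [← lineP_eval]; exact hn
      exact psik_ne_bot hc this
  · -- submean
    intro a _ b r hr _ m
    set p : Polynomial ℂ := lineP Q a b with hp
    have hcm : ∀ θ : ℝ, a + ((r : ℂ) * Complex.exp (θ * Complex.I)) • b
        = a + (circleMap 0 r θ) • b := by
      intro θ; rw [circleMap]; simp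
    have htr : ∀ θ : ℝ, trunc ψ m (a + ((r : ℂ) * Complex.exp (θ * Complex.I)) • b)
        = if p.eval (circleMap 0 r θ) = 0 then -(m:ℝ)
          else max (c * Real.log (‖p.eval (circleMap 0 r θ)‖)) (-(m:ℝ)) := by
      intro θ
      rw [trunc, hcm θ, hψ]
      simp only [logAbsEReal_mul_pos hc]
      rw [← lineP_eval Q a b (circleMap 0 r θ), ← hp]
      split_ifs with h
      · rw [bot_sup_eq]
        exact EReal.toReal_coe _
      · have hmax : ((c * Real.log (‖Polynomial.eval (circleMap 0 r θ) p‖) : ℝ) : EReal)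
            ⊔ ((-(m:ℝ) : ℝ) : EReal)
            = ((max (c * Real.log (‖Polynomial.eval (circleMap 0 r θ) p‖)) (-(m:ℝ)) : ℝ) : EReal) := by
          exact_mod_cast rfl
        rw [hmax, EReal.toReal_coe]
    have hIeq : (∫ θ in (0:ℝ)..(2*Real.pi), trunc ψ m (a + ((r : ℂ) * Complex.exp (θ * Complex.I)) • b))
        = ∫ θ in (0:ℝ)..(2*Real.pi),
            (if p.eval (circleMap 0 r θ) = 0 then -(m:ℝ)
             else max (c * Real.log (‖p.eval (circleMap 0 r θ)‖)) (-(m:ℝ))) :=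
      intervalIntegral.integral_congr fun θ _ => htr θ
    have hevala : MvPolynomial.eval a Q = p.eval 0 := by
      rw [hp, lineP_eval]
      have hab : a + (0:ℂ) • b = a := by funext i; simp
      rw [hab]
    rcases eq_or_ne (p.eval 0) 0 with h0 | h0
    · have : ψ a = ⊥ := by
        rw [hψ]
        simp only [logAbsEReal_mul_pos hc, hevala, if_pos h0]
      rw [this]
      exact bot_le
    · have hkey := poly_trunc_circle_ge p hr hc (by positivity : (0:ℝ) ≤ (m:ℝ)) h0
      have hψa : ψ a = ((c * Real.log (‖p.eval 0‖) : ℝ) : EReal) := by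
        rw [hψ]
        simp only [logAbsEReal_mul_pos hc, hevala, if_neg h0]
      rw [hψa, hIeq]
      rw [EReal.coe_le_coe_iff]
      have hpi : (0:ℝ) < 2*Real.pi := by positivity
      have h2 := mul_le_mul_of_nonneg_left hkey (le_of_lt (inv_pos.mpr hpi))
      rwa [← mul_assoc, inv_mul_cancel₀ hpi.ne', one_mul] at h2

lemma enorm2_coord (z : Cn 2) (i : Fin 2) : ‖z i‖ ≤ enorm2 z := by
  rw [enorm2, show ‖z i‖ = Real.sqrt (‖z i‖ ^ 2) from
    (Real.sqrt_sq (norm_nonneg _)).symm]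
  refine Real.sqrt_le_sqrt ?_
  exact Finset.single_le_sum (f := fun j : Fin 2 => ‖z j‖ ^ 2)
    (fun j _ => sq_nonneg _) (Finset.mem_univ i)

lemma Qk_abs_bound (k : ℕ) (z : Cn 2) :
    ‖MvPolynomial.eval z (Qk k)‖ ≤ 2^(3*k) * max (enorm2 z) 1 ^ (k+1) := by
  set N : ℝ := max (enorm2 z) 1 with hN
  have hN1 : (1:ℝ) ≤ N := le_max_right _ _
  have hzi : ∀ i : Fin 2, ‖z i‖ ≤ N :=
    fun i => le_trans (enorm2_coord z i) (le_max_left _ _)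
  have heval : MvPolynomial.eval z (Qk k)
      = ∑ j ∈ Finset.range (3*k+1), ((Nat.choose (3*k) j : ℂ)) * (z 0)^(j/3) * (z 1)^(j%3) := by
    rw [Qk, map_sum]
    refine Finset.sum_congr rfl fun j _ => ?_
    simp
  rw [heval]
  calc ‖∑ j ∈ Finset.range (3*k+1), ((Nat.choose (3*k) j : ℂ)) * (z 0)^(j/3) * (z 1)^(j%3)‖
      ≤ ∑ j ∈ Finset.range (3*k+1), ‖((Nat.choose (3*k) j : ℂ)) * (z 0)^(j/3) * (z 1)^(j%3)‖ :=
        norm_sum_le _ _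
    _ ≤ ∑ j ∈ Finset.range (3*k+1), ((Nat.choose (3*k) j : ℝ)) * N^(k+1) := by
        refine Finset.sum_le_sum fun j hj => ?_
        rw [Finset.mem_range] at hj
        rw [norm_mul, norm_mul, norm_pow, norm_pow, Complex.norm_natCast]
        have h1 : ‖z 0‖ ^ (j/3) ≤ N ^ (j/3) :=
          pow_le_pow_left₀ (norm_nonneg _) (hzi 0) _
        have h2 : ‖z 1‖ ^ (j % 3) ≤ N ^ (j % 3) :=
          pow_le_pow_left₀ (norm_nonneg _) (hzi 1) _
        have h3 : N ^ (j/3) * N ^ (j % 3) = N ^ (j/3 + j % 3) := (pow_add N _ _).symm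
        have h4 : N ^ (j/3 + j % 3) ≤ N ^ (k+1) := pow_le_pow_right₀ hN1 (by omega)
        have hb1 : (0:ℝ) ≤ ‖z 0‖ ^ (j/3) := pow_nonneg (norm_nonneg _) _
        have hb2 : (0:ℝ) ≤ ‖z 1‖ ^ (j%3) := pow_nonneg (norm_nonneg _) _
        have hN0 : (0:ℝ) ≤ N := by linarith
        rw [mul_assoc]
        refine mul_le_mul_of_nonneg_left ?_ (Nat.cast_nonneg _)
        calc ‖z 0‖ ^ (j/3) * ‖z 1‖ ^ (j%3)
            ≤ N ^ (j/3) * N ^ (j%3) := by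
              refine mul_le_mul h1 h2 hb2 (pow_nonneg hN0 _)
          _ = N ^ (j/3 + j%3) := h3
          _ ≤ N ^ (k+1) := h4
    _ = 2^(3*k) * N^(k+1) := by
        rw [← Finset.sum_mul]
        congr 1
        rw [← Nat.cast_sum]
        rw [Nat.sum_range_choose]
        push_cast
        ring

lemma Qk_growth (k : ℕ) (hk : 1 ≤ k) (z : Cn 2) :
    ((1 / (3 * k) : ℝ) : EReal) * logAbsEReal (MvPolynomial.eval z (Qk k))
      ≤ ((((k:ℝ) + 1) / (3 * k) * logPlusNorm z + Real.log 2 : ℝ) : EReal) := by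
  have h3k : (0:ℝ) < 3*k := by
    have : (1:ℝ) ≤ (k:ℝ) := by exact_mod_cast hk
    linarith
  have hc : (0:ℝ) < 1/(3*(k:ℝ)) := by positivity
  rw [logAbsEReal_mul_pos hc]
  split_ifs with h
  · exact bot_le
  · rw [EReal.coe_le_coe_iff]
    set N : ℝ := max (enorm2 z) 1 with hN
    have hN1 : (1:ℝ) ≤ N := le_max_right _ _
    have hbound := Qk_abs_bound k z
    have habs : 0 < ‖MvPolynomial.eval z (Qk k)‖ := norm_pos_iff.mpr h
    have hlog1 : Real.log (‖MvPolynomial.eval z (Qk k)‖)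
        ≤ Real.log (2^(3*k) * N^(k+1)) := Real.log_le_log habs hbound
    have hlog2 : Real.log ((2:ℝ)^(3*k) * N^(k+1))
        = (3*k) * Real.log 2 + ((k:ℝ)+1) * Real.log N := by
      rw [Real.log_mul (by positivity) (by positivity), Real.log_pow, Real.log_pow]
      push_cast
      ring
    have hlogN : Real.log N = logPlusNorm z := by
      rcases le_total 1 (enorm2 z) with he | he
      · rw [hN, max_eq_left he, logPlusNorm, max_eq_left (Real.log_nonneg he)]
      · have h0 : (0:ℝ) ≤ enorm2 z := Real.sqrt_nonneg _
        rw [hN, max_eq_right he, Real.log_one, logPlusNorm, max_eq_right (Real.log_nonpos h0 he)]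
    have hfinal : Real.log (‖MvPolynomial.eval z (Qk k)‖)
        ≤ (3*(k:ℝ)) * Real.log 2 + ((k:ℝ)+1) * logPlusNorm z := by
      rw [← hlogN]
      calc Real.log (‖MvPolynomial.eval z (Qk k)‖)
          ≤ Real.log ((2:ℝ)^(3*k) * N^(k+1)) := hlog1
        _ = (3*(k:ℝ)) * Real.log 2 + ((k:ℝ)+1) * Real.log N := hlog2
    have := mul_le_mul_of_nonneg_left hfinal hc.le
    calc 1/(3*(k:ℝ)) * Real.log (‖MvPolynomial.eval z (Qk k)‖)
        ≤ 1/(3*(k:ℝ)) * ((3*(k:ℝ)) * Real.log 2 + ((k:ℝ)+1) * logPlusNorm z) := this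
      _ = ((k:ℝ)+1) / (3*(k:ℝ)) * logPlusNorm z + Real.log 2 := by
          field_simp
          ring
lemma Qk_onX (k : ℕ) (hk : 1 ≤ k) (z : Cn 2) (hz : z 0 = z 1 ^ 3) :
    ((1 / (3 * k) : ℝ) : EReal) * logAbsEReal (MvPolynomial.eval z (Qk k))
      = logAbsEReal (1 + z 1) := by
  have h3k : (0:ℝ) < 3*k := by
    have : (1:ℝ) ≤ (k:ℝ) := by exact_mod_cast hk
    linarith
  have hc : (0:ℝ) < 1/(3*(k:ℝ)) := by positivity
  have hzeq : z = ![z 1 ^ 3, z 1] := by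
    funext i
    fin_cases i
    · simpa using hz
    · simp
  have he : MvPolynomial.eval z (Qk k) = (z 1 + 1) ^ (3*k) := by
    conv_lhs => rw [hzeq]
    exact Qk_eval k (z 1)
  rw [he]
  rcases eq_or_ne (1 + z 1) 0 with h | h
  · have h1 : z 1 + 1 = 0 := by rw [add_comm] at h; exact h
    rw [logAbsEReal_mul_pos hc, logAbsEReal, if_pos h, if_pos (by
      rw [h1]; exact zero_pow (by omega))]
  · have h1 : z 1 + 1 ≠ 0 := by rwa [add_comm] at h
    have h2 : (z 1 + 1) ^ (3*k) ≠ 0 := pow_ne_zero _ h1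
    rw [logAbsEReal_mul_pos hc, if_neg h2, logAbsEReal, if_neg h]
    rw [EReal.coe_eq_coe_iff]
    rw [norm_pow, Real.log_pow]
    have hcomm : ‖z 1 + 1‖ = ‖1 + z 1‖ := by rw [add_comm]
    rw [hcomm]
    field_simp
    push_cast
    ring

lemma Qk_not_bot (k : ℕ) (hk : 1 ≤ k) :
    ((1 / (3 * k) : ℝ) : EReal) * logAbsEReal (MvPolynomial.eval (![(0:ℂ)^3, 0]) (Qk k)) ≠ ⊥ := by
  have hc : (0:ℝ) < 1/(3*(k:ℝ)) := by
    have : (1:ℝ) ≤ (k:ℝ) := by exact_mod_cast hk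
    positivity
  refine psik_ne_bot hc ?_
  rw [Qk_eval k 0]
  norm_num



end Stmt17Aux
end

open MvPolynomial in
/-- For every integer `k ≥ 1`, the polynomial
`Q_k(x, y) = Σ_{j=0}^{3k} C(3k, j) x^{⌊j/3⌋} y^{j mod 3}` has total degree `k + 1`, satisfies
`Q_k(y³, y) = (y + 1)^{3k}` for all `y ∈ ℂ`, and has leading term `3k·x^{k−1} y²`.
Consequently, for `X = {(x,y) ∈ ℂ² : x = y³}` and `η(x, y) = log|1 + y|`, the function
`ψ_k = (1/(3k)) log|Q_k|` belongs to `𝓛_{(k+1)/(3k)}(ℂ²)` and satisfies `ψ_k = η` on `X`. -/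
theorem stmt17 (k : ℕ) (hk : 1 ≤ k) :
    let Q : MvPolynomial (Fin 2) ℂ :=
      ∑ j ∈ Finset.range (3 * k + 1),
        MvPolynomial.C ((Nat.choose (3 * k) j : ℂ)) *
          MvPolynomial.X 0 ^ (j / 3) * MvPolynomial.X 1 ^ (j % 3)
    let X : Set (Cn 2) := {z | z 0 = z 1 ^ 3}
    let η : Cn 2 → EReal := fun z => logAbsEReal (1 + z 1)
    let ψk : Cn 2 → EReal := fun z =>
      ((1 / (3 * k) : ℝ) : EReal) * logAbsEReal (MvPolynomial.eval z Q)
    Q.totalDegree = k + 1 ∧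
    (∀ y : ℂ, MvPolynomial.eval ![y ^ 3, y] Q = (y + 1) ^ (3 * k)) ∧
    MvPolynomial.coeff (Finsupp.single (0 : Fin 2) (k - 1) + Finsupp.single (1 : Fin 2) 2) Q
      = (3 * k : ℂ) ∧
    MemLelong ((k + 1) / (3 * k)) ψk Set.univ ∧
    (∀ z ∈ X, ψk z = η z) := by
  intro Q X η ψk
  have hc : (0:ℝ) < 1/(3*(k:ℝ)) := by
    have : (1:ℝ) ≤ (k:ℝ) := by exact_mod_cast hk
    positivity
  refine ⟨Stmt17Aux.Qk_deg k hk, fun y => Stmt17Aux.Qk_eval k y, Stmt17Aux.Qk_coeff k hk, ?_,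
    fun z hz => Stmt17Aux.Qk_onX k hk z hz⟩
  constructor
  · constructor
    · exact ⟨![(0:ℂ)^3, 0], Set.mem_univ _, Stmt17Aux.Qk_not_bot k hk⟩
    · intro z _
      exact ⟨Set.univ, isOpen_univ, Set.mem_univ z, ψk,
        Stmt17Aux.psh_univ (Stmt17Aux.Qk k) (Stmt17Aux.Qk_ne_zero k hk) hc, fun w _ => rfl⟩
  · exact ⟨Real.log 2, fun z _ => Stmt17Aux.Qk_growth k hk z⟩


end
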